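/- Let f : M → M be continuous on a compact metric space with the periodic shadowing property: for all ε > 0 there is δ > 0 such that every periodic δ-pseudo-orbit is ε-shadowed by a true periodic orbit. Then every ergodic f-invariant probability measure is a weak* limit of invariant measures supported on single periodic orbits; that is, E_f ⊆ closure(Per_f). -/

import Mathlib

open MeasureTheory Filter Topology Metric Set Function
open scoped ENNReal NNReal

lemma measurable_birkhoffAverage {M : Type*} [MeasurableSpace M]
    {f : M → M} (hf : Measurable f) {h : M → ℝ} (hm : Measurable h) (n : ℕ) :
    Measurable (fun x => birkhoffAverage ℝ f h n x) := by
  simp only [birkhoffAverage, birkhoffSum]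
  have : Measurable (fun x => ∑ i ∈ Finset.range n, h (f^[i] x)) :=
    Finset.measurable_sum _ (fun i _ => hm.comp (hf.iterate i))
  exact this.const_smul ((n : ℝ)⁻¹)

lemma erg_tim {M : Type*} [MeasurableSpace M]
    (f : M → M) (ν : MeasureTheory.Measure M) [IsProbabilityMeasure ν]
    (hErg : Ergodic f ν) (h : M → ℝ) (hm : Measurable h)
    (C : ℝ) (hb : ∀ x, |h x| ≤ C) :
    TendstoInMeasure ν (fun n x => birkhoffAverage ℝ f h n x) atTop
      (fun _ => ∫ x, h x ∂ν) := by
  have pres : MeasurePreserving f ν ν := hErg.toMeasurePreserving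
  have hfm : Measurable f := pres.measurable
  have hmem : MemLp h 2 ν :=
    MemLp.of_bound hm.aestronglyMeasurable C
      (ae_of_all _ fun x => by simpa [Real.norm_eq_abs] using hb x)
  set hvec : Lp ℝ 2 ν := hmem.toLp h with hhvec
  set T0 := Lp.compMeasurePreserving (E := ℝ) (p := 2) f pres with hT0
  have hT0smul : ∀ (c : ℝ) (g : Lp ℝ 2 ν), T0 (c • g) = c • T0 g := by
    intro c g
    apply Lp.ext
    have h1 := Lp.coeFn_compMeasurePreserving (c • g) pres
    have h2 := Lp.coeFn_compMeasurePreserving g pres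
    have h3 : (⇑(c • g) : M → ℝ) ∘ f =ᵐ[ν] (c • ⇑g) ∘ f :=
      pres.quasiMeasurePreserving.ae_eq_comp (Lp.coeFn_smul c g)
    refine h1.trans (h3.trans ?_)
    have : (c • ⇑g) ∘ f = c • (⇑g ∘ f) := rfl
    rw [this]
    exact ((h2.const_smul c).symm.trans (Lp.coeFn_smul c (T0 g)).symm)
  set Tlin : Lp ℝ 2 ν →ₗ[ℝ] Lp ℝ 2 ν :=
    { toFun := T0, map_add' := T0.map_add, map_smul' := hT0smul } with hTlin
  set U : Lp ℝ 2 ν →L[ℝ] Lp ℝ 2 ν :=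
    Tlin.mkContinuous 1 (fun g => by
      rw [one_mul]
      exact le_of_eq (Lp.norm_compMeasurePreserving g pres)) with hU
  have hU1 : ‖U‖ ≤ 1 := LinearMap.mkContinuous_norm_le Tlin zero_le_one _
  have hUapp : ∀ g : Lp ℝ 2 ν, ⇑(U g) =ᵐ[ν] ⇑g ∘ f := by
    intro g; exact Lp.coeFn_compMeasurePreserving g pres
  have key := U.tendsto_birkhoffAverage_orthogonalProjection hU1 hvec
  set w : Lp ℝ 2 ν := ↑((U.eqLocus (1 : Lp ℝ 2 ν →L[ℝ] Lp ℝ 2 ν)).orthogonalProjectionOnto hvec) with hw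
  have hUw : U w = w := by
    have := ((U.eqLocus (1 : Lp ℝ 2 ν →L[ℝ] Lp ℝ 2 ν)).orthogonalProjectionOnto hvec).2
    exact LinearMap.mem_eqLocus.mp this
  have hwf : (⇑w : M → ℝ) ∘ f =ᵐ[ν] ⇑w := by
    have := hUapp w
    rw [hUw] at this
    exact this.symm
  obtain ⟨c, hc⟩ := hErg.ae_eq_const_of_ae_eq_comp₀
    ((Lp.aestronglyMeasurable w).aemeasurable.nullMeasurable) hwf
  -- iterates
  have hIter : ∀ n, ⇑((⇑U)^[n] hvec) =ᵐ[ν] fun x => h (f^[n] x) := by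
    intro n
    induction n with
    | zero => simpa using hmem.coeFn_toLp
    | succ n ih =>
      rw [Function.iterate_succ_apply']
      refine (hUapp _).trans ?_
      have h3 : (⇑((⇑U)^[n] hvec) : M → ℝ) ∘ f =ᵐ[ν] (fun x => h (f^[n] x)) ∘ f :=
        pres.quasiMeasurePreserving.ae_eq_comp ih
      refine h3.trans ?_
      apply Filter.EventuallyEq.of_eq
      funext x
      simp [Function.iterate_succ_apply]
  have hsum : ∀ n, ⇑(∑ i ∈ Finset.range n, (⇑U)^[i] hvec) =ᵐ[ν]
      fun x => ∑ i ∈ Finset.range n, h (f^[i] x) := by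
    intro n
    induction n with
    | zero => simp [Finset.sum_range_zero]; exact Lp.coeFn_zero ℝ 2 ν
    | succ n ih =>
      rw [Finset.sum_range_succ]
      refine (Lp.coeFn_add _ _).trans ?_
      filter_upwards [ih, hIter n] with x h1 h2
      simp only [Pi.add_apply, h1, h2, Finset.sum_range_succ]
  have havg : ∀ n, ⇑(birkhoffAverage ℝ (⇑U) id n hvec) =ᵐ[ν]
      fun x => birkhoffAverage ℝ f h n x := by
    intro n
    have h1 : birkhoffAverage ℝ (⇑U) id n hvec
        = (n : ℝ)⁻¹ • ∑ i ∈ Finset.range n, (⇑U)^[i] hvec := rfl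
    rw [h1]
    refine (Lp.coeFn_smul _ _).trans ?_
    filter_upwards [hsum n] with x hx
    simp only [Pi.smul_apply, hx]
    rfl
  -- the constant equals the integral of h
  set oneL : Lp ℝ 2 ν := (memLp_const (1:ℝ)).toLp (fun _ => (1:ℝ)) with honeL
  have hφ : ∀ v : Lp ℝ 2 ν, (inner ℝ v oneL : ℝ) = ∫ x, v x ∂ν := by
    intro v
    rw [L2.inner_def]
    refine integral_congr_ae ?_
    filter_upwards [MemLp.coeFn_toLp (memLp_const (1:ℝ))] with x hx
    have hx' : (↑↑oneL : M → ℝ) x = 1 := by rw [honeL]; exact hx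
    rw [hx']
    simp [RCLike.inner_apply]
  have hcont : Continuous (fun v : Lp ℝ 2 ν => (inner ℝ v oneL : ℝ)) :=
    Continuous.inner continuous_id continuous_const
  have hInt : ∀ i : ℕ, Integrable (fun x => h (f^[i] x)) ν := by
    intro i
    refine memLp_one_iff_integrable.mp ?_
    exact MemLp.of_bound ((hm.comp (hfm.iterate i)).aestronglyMeasurable) C
      (ae_of_all _ fun x => by simpa [Real.norm_eq_abs] using hb _)
  have hIntEq : ∀ i : ℕ, ∫ x, h (f^[i] x) ∂ν = ∫ x, h x ∂ν := by
    intro i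
    have hp : MeasurePreserving f^[i] ν ν := pres.iterate i
    conv_rhs => rw [← hp.map_eq]
    exact (integral_map (hp.measurable.aemeasurable)
      (by rw [hp.map_eq]; exact hm.aestronglyMeasurable)).symm
  have hφavg : ∀ n : ℕ, 1 ≤ n →
      (inner ℝ (birkhoffAverage ℝ (⇑U) id n hvec) oneL : ℝ) = ∫ x, h x ∂ν := by
    intro n hn
    rw [hφ]
    rw [integral_congr_ae (havg n)]
    have e1 : ∫ x, birkhoffAverage ℝ f h n x ∂ν
        = (n:ℝ)⁻¹ • ∫ x, birkhoffSum f h n x ∂ν := by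
      simp only [birkhoffAverage]; rw [integral_smul]
    rw [e1]
    have e2 : ∫ x, birkhoffSum f h n x ∂ν
        = ∑ i ∈ Finset.range n, ∫ x, h (f^[i] x) ∂ν := by
      simp only [birkhoffSum]
      exact integral_finset_sum _ (fun i _ => (hInt i))
    rw [e2]
    simp only [hIntEq]
    rw [Finset.sum_const, Finset.card_range, nsmul_eq_mul, smul_eq_mul, ← mul_assoc,
      inv_mul_cancel₀ (by positivity : (n:ℝ) ≠ 0), one_mul]
  have hφw : (inner ℝ w oneL : ℝ) = c := by
    rw [hφ]
    rw [integral_congr_ae hc]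
    simp
  have hclim : Tendsto (fun n => (inner ℝ (birkhoffAverage ℝ (⇑U) id n hvec) oneL : ℝ))
      atTop (𝓝 c) := by
    rw [← hφw]
    exact (hcont.tendsto w).comp key
  have hceq : c = ∫ x, h x ∂ν := by
    have h2 : Tendsto (fun n => (inner ℝ (birkhoffAverage ℝ (⇑U) id n hvec) oneL : ℝ))
        atTop (𝓝 (∫ x, h x ∂ν)) := by
      refine Tendsto.congr' ?_ tendsto_const_nhds
      filter_upwards [eventually_ge_atTop 1] with n hn
      exact (hφavg n hn).symm
    exact tendsto_nhds_unique hclim h2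
  set cL : Lp ℝ 2 ν := (memLp_const (∫ x, h x ∂ν)).toLp (fun _ => ∫ x, h x ∂ν) with hcL
  have hwcL : w = cL := by
    apply Lp.ext
    refine hc.trans ?_
    rw [hceq]
    exact (MemLp.coeFn_toLp _).symm
  have hnorm : Tendsto (fun n => ‖birkhoffAverage ℝ (⇑U) id n hvec - cL‖) atTop (𝓝 0) := by
    rw [← hwcL]
    exact tendsto_iff_norm_sub_tendsto_zero.mp key
  refine tendstoInMeasure_of_tendsto_eLpNorm (p := 2) two_ne_zero
    (fun n => (measurable_birkhoffAverage hfm hm n).aestronglyMeasurable)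
    aestronglyMeasurable_const ?_
  have heq : ∀ n, eLpNorm ((fun x => birkhoffAverage ℝ f h n x) - fun _ => ∫ x, h x ∂ν) 2 ν
      = ENNReal.ofReal ‖birkhoffAverage ℝ (⇑U) id n hvec - cL‖ := by
    intro n
    have hae : ((fun x => birkhoffAverage ℝ f h n x) - fun _ => ∫ x, h x ∂ν)
        =ᵐ[ν] ⇑(birkhoffAverage ℝ (⇑U) id n hvec - cL) := by
      refine Filter.EventuallyEq.trans ?_ (Lp.coeFn_sub _ _).symm
      exact ((havg n).symm).sub ((MemLp.coeFn_toLp _).symm)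
    rw [eLpNorm_congr_ae hae, Lp.norm_def, ENNReal.ofReal_toReal (Lp.eLpNorm_ne_top _)]
  simp only [heq]
  have := ENNReal.tendsto_ofReal hnorm
  simpa using this

lemma unif_many {M : Type*} [MetricSpace M] [CompactSpace M] (k : ℕ)
    (u : ℕ → BoundedContinuousFunction M ℝ) {ε : ℝ} (hε : 0 < ε) :
    ∃ η > (0:ℝ), ∀ j < k, ∀ a b : M, dist a b < η → dist (u j a) (u j b) < ε := by
  induction k with
  | zero => exact ⟨1, one_pos, fun j hj => absurd hj (Nat.not_lt_zero j)⟩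
  | succ k ih =>
    obtain ⟨η₁, hη₁, h1⟩ := ih
    have huc : UniformContinuous (⇑(u k)) :=
      CompactSpace.uniformContinuous_of_continuous (u k).continuous
    obtain ⟨η₂, hη₂, h2⟩ := Metric.uniformContinuous_iff.mp huc ε hε
    refine ⟨min η₁ η₂, lt_min hη₁ hη₂, fun j hj a b hab => ?_⟩
    rcases Nat.lt_succ_iff_lt_or_eq.mp hj with hj | rfl
    · exact h1 j hj a b (hab.trans_le (min_le_left _ _))
    · exact h2 (hab.trans_le (min_le_right _ _))

lemma per_shift (v : ℕ → ℝ) (p : ℕ) (hper : ∀ l, v (l + p) = v l) :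
    ∀ (k l : ℕ), v (l + k * p) = v l := by
  intro k
  induction k with
  | zero => simp
  | succ k ih =>
    intro l
    have : l + (k + 1) * p = (l + k * p) + p := by ring
    rw [this, hper, ih]

lemma sum_block (v : ℕ → ℝ) (p : ℕ) (hper : ∀ l, v (l + p) = v l) (k : ℕ) :
    ∑ l ∈ Finset.range (k * p), v l = (k : ℝ) * ∑ l ∈ Finset.range p, v l := by
  induction k with
  | zero => simp
  | succ k ih =>
    have : (k + 1) * p = k * p + p := by ring
    rw [this, Finset.sum_range_add, ih]
    have : ∀ x ∈ Finset.range p, v (k * p + x) = v x := by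
      intro x _
      rw [add_comm, per_shift v p hper k x]
    rw [Finset.sum_congr rfl this]
    push_cast
    ring

lemma mod_succ_cases (i n : ℕ) (hi : 0 < i) :
    ((n + 1) % i = n % i + 1 ∧ n % i + 1 < i) ∨ ((n + 1) % i = 0 ∧ n % i + 1 = i) := by
  have hlt : n % i < i := Nat.mod_lt n hi
  rcases Nat.lt_or_ge (n % i + 1) i with h | h
  · left
    refine ⟨?_, h⟩
    have h2 : 2 ≤ i := by omega
    rw [Nat.add_mod, Nat.mod_eq_of_lt (show 1 < i by omega)]
    exact Nat.mod_eq_of_lt h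
  · right
    have heq : n % i + 1 = i := by omega
    refine ⟨?_, heq⟩
    have hd := Nat.div_add_mod n i
    have : n + 1 = (n / i + 1) * i := by
      calc n + 1 = i * (n / i) + (n % i + 1) := by omega
        _ = i * (n / i) + i := by rw [heq]
        _ = (n / i + 1) * i := by ring
    rw [this, Nat.mul_mod_left]

lemma core {M : Type*} [MetricSpace M] [CompactSpace M] [MeasurableSpace M] [BorelSpace M]
    (f : M → M) (ν : MeasureTheory.Measure M) [IsProbabilityMeasure ν]
    (hErg : Ergodic f ν)
    (k : ℕ) (u : ℕ → BoundedContinuousFunction M ℝ) {ε δ : ℝ} (hε : 0 < ε) (hδ : 0 < δ) :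
    ∃ (x : M) (i : ℕ), 0 < i ∧ dist (f^[i] x) x < δ ∧
      ∀ j < k, |birkhoffAverage ℝ f (⇑(u j)) i x - ∫ y, u j y ∂ν| < ε := by
  have hfm : Measurable f := hErg.toMeasurePreserving.measurable
  -- a ball of positive measure
  obtain ⟨x₀, hx₀⟩ : ∃ x₀ : M, 0 < ν (ball x₀ (δ/2)) := by
    by_contra hcon
    push_neg at hcon
    obtain ⟨t, ht⟩ := IsCompact.elim_finite_subcover (isCompact_univ (X := M))
      (fun x : M => ball x (δ/2)) (fun x => isOpen_ball)
      (fun x _ => mem_iUnion.mpr ⟨x, mem_ball_self (by linarith)⟩)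
    have h1 : ν univ ≤ ∑ x ∈ t, ν (ball x (δ/2)) :=
      le_trans (measure_mono ht) (measure_biUnion_finset_le t _)
    have h2 : ∀ x ∈ t, ν (ball x (δ/2)) = 0 :=
      fun x _ => le_antisymm (hcon x) bot_le
    rw [Finset.sum_congr rfl h2, Finset.sum_const, smul_zero] at h1
    simp [measure_univ] at h1
  set B : Set M := ball x₀ (δ/2) with hBdef
  have hB : MeasurableSet B := measurableSet_ball
  set c : ℝ := (ν B).toReal with hcdef
  have hc : 0 < c := ENNReal.toReal_pos hx₀.ne' (measure_ne_top ν B)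
  have hc1 : c ≤ 1 := by
    rw [hcdef, ← ENNReal.toReal_one, ← measure_univ (μ := ν)]
    exact ENNReal.toReal_mono (measure_ne_top _ _) (measure_mono (subset_univ _))
  -- indicator function of B
  set ind : M → ℝ := B.indicator (fun _ => (1:ℝ)) with hinddef
  have hindm : Measurable ind := measurable_const.indicator hB
  have hindb : ∀ x, |ind x| ≤ 1 := by
    intro x
    by_cases hx : x ∈ B <;> simp [hinddef, Set.indicator, hx]
  have hindint : ∫ x, ind x ∂ν = c := by
    rw [hinddef]
    rw [integral_indicator_const (1:ℝ) hB]
    simp [hcdef, measureReal_def]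
  have hWt0 := tendstoInMeasure_iff_dist.mp (erg_tim f ν hErg ind hindm 1 hindb) (c/2) (half_pos hc)
  rw [hindint] at hWt0
  -- bad sets for the test functions
  set D : ℕ → Set M := fun i => ⋃ j ∈ Finset.range k,
    {x | ε ≤ dist (birkhoffAverage ℝ f (⇑(u j)) i x) (∫ y, u j y ∂ν)} with hDdef
  have hDm : ∀ i, MeasurableSet (D i) := by
    intro i
    refine MeasurableSet.biUnion (Finset.range k).countable_toSet (fun j _ => ?_)
    have : Measurable (fun x => dist (birkhoffAverage ℝ f (⇑(u j)) i x) (∫ y, u j y ∂ν)) :=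
      (measurable_birkhoffAverage hfm (u j).continuous.measurable i).dist measurable_const
    exact measurableSet_le measurable_const this
  have hDt : Tendsto (fun i => ν (D i)) atTop (𝓝 0) := by
    have hub : ∀ i, ν (D i) ≤ ∑ j ∈ Finset.range k,
        ν {x | ε ≤ dist (birkhoffAverage ℝ f (⇑(u j)) i x) (∫ y, u j y ∂ν)} :=
      fun i => measure_biUnion_finset_le _ _
    have hsum : Tendsto (fun i => ∑ j ∈ Finset.range k,
        ν {x | ε ≤ dist (birkhoffAverage ℝ f (⇑(u j)) i x) (∫ y, u j y ∂ν)}) atTop (𝓝 0) := by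
      have : (0:ℝ≥0∞) = ∑ j ∈ Finset.range k, 0 := by simp
      rw [this]
      refine tendsto_finset_sum _ (fun j _ => ?_)
      have := tendstoInMeasure_iff_dist.mp (erg_tim f ν hErg (⇑(u j)) (u j).continuous.measurable ‖u j‖
        (fun x => by simpa [Real.norm_eq_abs] using (u j).norm_coe_le_norm x)) ε hε
      exact this
    exact tendsto_of_tendsto_of_tendsto_of_le_of_le tendsto_const_nhds hsum
      (fun i => zero_le) hub
  set dreal : ℕ → ℝ := fun i => (ν (D i)).toReal with hdrealdef
  have hdrt : Tendsto dreal atTop (𝓝 0) := by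
    have := (ENNReal.tendsto_toReal (a := 0) (by simp)).comp hDt
    exact this
  have hdr0 : ∀ i, 0 ≤ dreal i := fun i => ENNReal.toReal_nonneg
  have hdr1 : ∀ i, dreal i ≤ 1 := by
    intro i
    rw [hdrealdef, ← ENNReal.toReal_one, ← measure_univ (μ := ν)]
    exact ENNReal.toReal_mono (measure_ne_top _ _) (measure_mono (subset_univ _))
  obtain ⟨N₀, hN₀⟩ : ∃ N₀, ∀ i ≥ N₀, dreal i ≤ c*c/16 := by
    have := Metric.tendsto_atTop.mp hdrt (c*c/16) (by positivity)
    obtain ⟨N, hN⟩ := this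
    exact ⟨N, fun i hi => by
      have := hN i hi
      rw [Real.dist_eq, sub_zero, abs_of_nonneg (hdr0 i)] at this
      linarith⟩
  -- bad sets for the indicator
  set W : ℕ → Set M := fun n => {x | c/2 ≤ dist (birkhoffAverage ℝ f ind n x) c} with hWdef
  have hWm : ∀ n, MeasurableSet (W n) := by
    intro n
    have : Measurable (fun x => dist (birkhoffAverage ℝ f ind n x) c) :=
      (measurable_birkhoffAverage hfm hindm n).dist measurable_const
    exact measurableSet_le measurable_const this
  obtain ⟨N₁, hN₁⟩ : ∃ N₁, ∀ n ≥ N₁, (ν (W n)).toReal ≤ c/4 := by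
    have hWt := hWt0
    have hWt' : Tendsto (fun n => (ν (W n)).toReal) atTop (𝓝 0) := by
      have := (ENNReal.tendsto_toReal (a := 0) (by simp)).comp hWt
      exact this
    obtain ⟨N, hN⟩ := Metric.tendsto_atTop.mp hWt' (c/4) (by positivity)
    exact ⟨N, fun n hn => by
      have := hN n hn
      rw [Real.dist_eq, sub_zero, abs_of_nonneg ENNReal.toReal_nonneg] at this
      linarith⟩
  -- choose n
  obtain ⟨n₂, hn₂⟩ := exists_nat_gt ((1 + (N₀:ℝ)) * 16 / (3*c*c))
  set n : ℕ := max (max N₀ N₁) (max n₂ 1) with hndef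
  have hnN₀ : N₀ ≤ n := le_trans (le_max_left _ _) (le_max_left _ _)
  have hnN₁ : N₁ ≤ n := le_trans (le_max_right _ _) (le_max_left _ _)
  have hn1 : 1 ≤ n := le_trans (le_max_right _ _) (le_max_right _ _)
  have hnbig : (1 + (N₀:ℝ)) < (n:ℝ) * (3*c*c) / 16 := by
    have h1 : (n₂:ℝ) ≤ (n:ℝ) := by
      exact_mod_cast le_trans (le_max_left _ _) (le_max_right _ _)
    rw [div_lt_iff₀ (by positivity)] at hn₂
    rw [lt_div_iff₀ (by norm_num)]
    nlinarith [mul_le_mul_of_nonneg_right h1 (by positivity : (0:ℝ) ≤ 3*c*c)]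
  -- the good set E
  set E : Set M := B \ W n with hEdef
  have hEm : MeasurableSet E := hB.diff (hWm n)
  have hEc : c/2 ≤ (ν E).toReal := by
    have h1 : ν B ≤ ν (B ∩ W n) + ν (B \ W n) := measure_le_inter_add_diff ν B (W n)
    have h2 : (ν B).toReal ≤ (ν (B ∩ W n)).toReal + (ν (B \ W n)).toReal := by
      rw [← ENNReal.toReal_add (measure_ne_top _ _) (measure_ne_top _ _)]
      exact ENNReal.toReal_mono (by
        exact ENNReal.add_ne_top.mpr ⟨measure_ne_top _ _, measure_ne_top _ _⟩) h1
    have h3 : (ν (B ∩ W n)).toReal ≤ (ν (W n)).toReal :=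
      ENNReal.toReal_mono (measure_ne_top _ _) (measure_mono inter_subset_right)
    have h4 := hN₁ n hnN₁
    rw [← hcdef] at h2
    linarith
  -- the sum S
  set r : ℕ → ℝ := fun i => (ν (E ∩ f^[i] ⁻¹' B)).toReal with hrdef
  have hr0 : ∀ i, 0 ≤ r i := fun i => ENNReal.toReal_nonneg
  have hr1 : ∀ i, r i ≤ 1 := by
    intro i
    rw [hrdef, ← ENNReal.toReal_one, ← measure_univ (μ := ν)]
    exact ENNReal.toReal_mono (measure_ne_top _ _) (measure_mono (subset_univ _))
  -- each r i as an integral over E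
  have hri : ∀ i, r i = ∫ x in E, ind (f^[i] x) ∂ν := by
    intro i
    have hcomp : (fun x => ind (f^[i] x)) = (f^[i] ⁻¹' B).indicator (fun _ => (1:ℝ)) := by
      funext x
      by_cases hx : f^[i] x ∈ B
      · simp [hinddef, Set.indicator, hx]
      · simp [hinddef, Set.indicator, hx]
    rw [hcomp, setIntegral_indicator (hB.preimage (hfm.iterate i)), setIntegral_const]
    simp [hrdef, measureReal_def]
  -- integrability
  have hindint' : Integrable (fun x => ∑ i ∈ Finset.range n, ind (f^[i] x)) ν := by
    refine memLp_one_iff_integrable.mp ?_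
    refine MemLp.of_bound ?_ (n:ℝ) (ae_of_all _ fun x => ?_)
    · exact (Finset.measurable_sum _ (fun i _ => hindm.comp (hfm.iterate i))).aestronglyMeasurable
    · rw [Real.norm_eq_abs]
      calc |∑ i ∈ Finset.range n, ind (f^[i] x)|
          ≤ ∑ i ∈ Finset.range n, |ind (f^[i] x)| := Finset.abs_sum_le_sum_abs _ _
        _ ≤ ∑ i ∈ Finset.range n, 1 := Finset.sum_le_sum (fun i _ => hindb _)
        _ = (n:ℝ) := by simp
  -- lower bound for the sum over E
  have hSlow : (c/2) * ((n:ℝ) * (c/2)) ≤ ∑ i ∈ Finset.range n, r i := by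
    have hsum_eq : ∑ i ∈ Finset.range n, r i
        = ∫ x in E, (∑ i ∈ Finset.range n, ind (f^[i] x)) ∂ν := by
      have hInt : ∀ i ∈ Finset.range n, IntegrableOn (fun x => ind (f^[i] x)) E ν := by
        intro i _
        refine Integrable.integrableOn ?_
        refine memLp_one_iff_integrable.mp ?_
        exact MemLp.of_bound ((hindm.comp (hfm.iterate i)).aestronglyMeasurable) 1
          (ae_of_all _ fun x => by simpa [Real.norm_eq_abs] using hindb _)
      rw [integral_finset_sum _ hInt]
      exact Finset.sum_congr rfl (fun i _ => hri i)
    rw [hsum_eq]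
    have hpoint : ∀ x ∈ E, (n:ℝ) * (c/2) ≤ ∑ i ∈ Finset.range n, ind (f^[i] x) := by
      intro x hx
      have hxW : x ∉ W n := hx.2
      have hdist : dist (birkhoffAverage ℝ f ind n x) c < c/2 := by
        by_contra hcon
        exact hxW (le_of_not_gt hcon)
      rw [Real.dist_eq, abs_lt] at hdist
      have havg : c/2 < birkhoffAverage ℝ f ind n x := by linarith [hdist.1]
      have hba : birkhoffAverage ℝ f ind n x
          = (n:ℝ)⁻¹ * ∑ i ∈ Finset.range n, ind (f^[i] x) := by
        simp [birkhoffAverage, birkhoffSum, smul_eq_mul]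
      have hnpos : (0:ℝ) < n := by exact_mod_cast hn1
      rw [hba] at havg
      calc (n:ℝ) * (c/2) ≤ (n:ℝ) * ((n:ℝ)⁻¹ * ∑ i ∈ Finset.range n, ind (f^[i] x)) := by
            exact mul_le_mul_of_nonneg_left (le_of_lt havg) (le_of_lt hnpos)
        _ = ∑ i ∈ Finset.range n, ind (f^[i] x) := by
            field_simp
    calc (c/2) * ((n:ℝ) * (c/2)) ≤ (ν E).toReal * ((n:ℝ) * (c/2)) := by
          have : (0:ℝ) ≤ (n:ℝ) * (c/2) := by positivity
          nlinarith
      _ = ∫ _ in E, ((n:ℝ) * (c/2)) ∂ν := by rw [setIntegral_const]; ring_nf; rw [measureReal_def]; ring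
      _ ≤ ∫ x in E, (∑ i ∈ Finset.range n, ind (f^[i] x)) ∂ν := by
          refine setIntegral_mono_on (integrableOn_const (measure_ne_top _ _))
            hindint'.integrableOn hEm hpoint
  -- upper bound on sum of dreal
  have hDsum : ∑ i ∈ Finset.range n, dreal i ≤ (N₀:ℝ) + (n:ℝ) * (c*c/16) := by
    have hsplit : ∑ i ∈ Finset.range n, dreal i
        = ∑ i ∈ Finset.range N₀, dreal i + ∑ i ∈ Finset.range (n - N₀), dreal (N₀ + i) := by
      rw [← Finset.sum_range_add, Nat.add_sub_cancel' hnN₀]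
    rw [hsplit]
    have h1 : ∑ i ∈ Finset.range N₀, dreal i ≤ (N₀:ℝ) := by
      calc ∑ i ∈ Finset.range N₀, dreal i ≤ ∑ i ∈ Finset.range N₀, 1 :=
            Finset.sum_le_sum (fun i _ => hdr1 i)
        _ = (N₀:ℝ) := by simp
    have h2 : ∑ i ∈ Finset.range (n - N₀), dreal (N₀ + i) ≤ (n:ℝ) * (c*c/16) := by
      calc ∑ i ∈ Finset.range (n - N₀), dreal (N₀ + i)
          ≤ ∑ i ∈ Finset.range (n - N₀), (c*c/16) :=
            Finset.sum_le_sum (fun i _ => hN₀ _ (Nat.le_add_right _ _))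
        _ = ((n - N₀ : ℕ):ℝ) * (c*c/16) := by rw [Finset.sum_const, Finset.card_range, nsmul_eq_mul]
        _ ≤ (n:ℝ) * (c*c/16) := by
            have : ((n - N₀ : ℕ):ℝ) ≤ (n:ℝ) := by exact_mod_cast Nat.sub_le n N₀
            nlinarith
    linarith
  -- pigeonhole
  have hex : ∃ i, 1 ≤ i ∧ i < n ∧ dreal i < r i := by
    by_contra hcon
    push_neg at hcon
    have hterm : ∀ i ∈ Finset.range n, r i ≤ dreal i + (if i = 0 then 1 else 0) := by
      intro i hi
      by_cases h0 : i = 0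
      · subst h0; simp; linarith [hr1 0, hdr0 0]
      · simp only [h0, if_false, add_zero]
        exact hcon i (Nat.one_le_iff_ne_zero.mpr h0) (Finset.mem_range.mp hi)
    have hsum_le : ∑ i ∈ Finset.range n, r i
        ≤ ∑ i ∈ Finset.range n, dreal i + 1 := by
      calc ∑ i ∈ Finset.range n, r i
          ≤ ∑ i ∈ Finset.range n, (dreal i + (if i = 0 then 1 else 0)) :=
            Finset.sum_le_sum hterm
        _ = ∑ i ∈ Finset.range n, dreal i + ∑ i ∈ Finset.range n, (if i = 0 then (1:ℝ) else 0) := by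
            rw [Finset.sum_add_distrib]
        _ = ∑ i ∈ Finset.range n, dreal i + 1 := by
            congr 1
            rw [Finset.sum_ite_eq' (Finset.range n) 0 (fun _ => (1:ℝ))]
            simp [Finset.mem_range, hn1]
            omega
    have e1 : (c/2) * ((n:ℝ) * (c/2)) = (n:ℝ) * (3*c*c) / 16 + (n:ℝ) * (c*c/16) := by ring
    linarith
  obtain ⟨i, hi1, hin, hilt⟩ := hex
  -- extract a point
  have hlt : ν (D i) < ν (E ∩ f^[i] ⁻¹' B) :=
    (ENNReal.toReal_lt_toReal (measure_ne_top _ _) (measure_ne_top _ _)).mp hilt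
  have hne : ν ((E ∩ f^[i] ⁻¹' B) \ D i) ≠ 0 := by
    intro h0
    have := measure_le_inter_add_diff ν (E ∩ f^[i] ⁻¹' B) (D i)
    rw [h0, add_zero] at this
    have h2 : ν (E ∩ f^[i] ⁻¹' B) ≤ ν (D i) :=
      le_trans this (measure_mono inter_subset_right)
    exact absurd (lt_of_lt_of_le hlt h2) (lt_irrefl _)
  obtain ⟨x, hx⟩ := nonempty_of_measure_ne_zero hne
  refine ⟨x, i, hi1, ?_, ?_⟩
  · have hxB : x ∈ B := hx.1.1.1
    have hxfB : f^[i] x ∈ B := hx.1.2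
    rw [hBdef, mem_ball] at hxB hxfB
    calc dist (f^[i] x) x ≤ dist (f^[i] x) x₀ + dist x₀ x := dist_triangle _ _ _
      _ = dist (f^[i] x) x₀ + dist x x₀ := by rw [dist_comm x₀ x]
      _ < δ/2 + δ/2 := by exact add_lt_add hxfB hxB
      _ = δ := by ring
  · intro j hj
    have hxD : x ∉ D i := hx.2
    simp only [hDdef] at hxD
    by_contra hcon
    push_neg at hcon
    exact hxD (Set.mem_iUnion₂.mpr ⟨j, Finset.mem_range.mpr hj,
      by rw [Set.mem_setOf_eq, Real.dist_eq]; exact hcon⟩)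

lemma periodic_prob {M : Type*} [MetricSpace M] [MeasurableSpace M] [BorelSpace M]
    (f : M → M) (z : M) (m : ℕ) (hm : 0 < m) :
    IsProbabilityMeasure ((m : ℝ≥0∞)⁻¹ •
      ∑ j ∈ Finset.range m, MeasureTheory.Measure.dirac (f^[j] z)) := by
  constructor
  rw [MeasureTheory.Measure.smul_apply, MeasureTheory.Measure.finset_sum_apply]
  simp only [MeasureTheory.Measure.dirac_apply_of_mem (Set.mem_univ _)]
  rw [Finset.sum_const, Finset.card_range, nsmul_eq_mul, mul_one, smul_eq_mul]
  rw [ENNReal.inv_mul_cancel (by exact_mod_cast hm.ne') (by simp)]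

lemma integral_periodic {M : Type*} [MetricSpace M] [MeasurableSpace M] [BorelSpace M]
    (f : M → M) (z : M) (m : ℕ) (hm : 0 < m) (g : BoundedContinuousFunction M ℝ) :
    ∫ y, g y ∂((m : ℝ≥0∞)⁻¹ •
        ∑ j ∈ Finset.range m, MeasureTheory.Measure.dirac (f^[j] z))
      = (m:ℝ)⁻¹ * ∑ l ∈ Finset.range m, g (f^[l] z) := by
  rw [integral_smul_measure]
  rw [integral_finset_sum_measure (fun l _ => g.integrable _)]
  simp only [integral_dirac]
  rw [ENNReal.toReal_inv, ENNReal.toReal_natCast, smul_eq_mul]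

theorem stmt15 {M : Type*} [MetricSpace M] [CompactSpace M]
    [MeasurableSpace M] [BorelSpace M]
    (f : M → M) (hf : Continuous f)
    -- periodic shadowing property
    (hshadow : ∀ ε > (0 : ℝ), ∃ δ > (0 : ℝ), ∀ (y : ℕ → M) (p : ℕ), 0 < p →
      (∀ n, dist (f (y n)) (y (n + 1)) < δ) → (∀ n, y (n + p) = y n) →
      ∃ z : M, (∃ m : ℕ, 0 < m ∧ f^[m] z = z) ∧ ∀ n, dist (f^[n] z) (y n) < ε) :
    {μ : ProbabilityMeasure M | Ergodic f (μ : Measure M)} ⊆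
      closure {μ : ProbabilityMeasure M | ∃ (z : M) (r : ℕ), 0 < r ∧ f^[r] z = z ∧
        (μ : Measure M) = (r : ℝ≥0∞)⁻¹ • ∑ j ∈ Finset.range r, Measure.dirac (f^[j] z)} := by
  intro μ hμ
  simp only [Set.mem_setOf_eq] at hμ
  set ν : MeasureTheory.Measure M := (μ : MeasureTheory.Measure M) with hνdef
  -- dense sequence of bounded continuous functions
  haveI : Nonempty C(M, ℝ) := ⟨0⟩
  obtain ⟨u0, hu0⟩ := TopologicalSpace.exists_dense_seq C(M, ℝ)
  set e := ContinuousMap.isometryEquivBoundedOfCompact M ℝ with hedef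
  set u : ℕ → BoundedContinuousFunction M ℝ := fun j => e (u0 j) with hudef
  have hudense : DenseRange u :=
    (e.surjective.denseRange).comp hu0 e.continuous
  -- main approximation step
  have main : ∀ k : ℕ, ∃ P : ProbabilityMeasure M,
      (∃ (z : M) (r : ℕ), 0 < r ∧ f^[r] z = z ∧
        (P : MeasureTheory.Measure M) = (r : ℝ≥0∞)⁻¹ •
          ∑ j ∈ Finset.range r, MeasureTheory.Measure.dirac (f^[j] z)) ∧
      ∀ j ≤ k, |∫ y, u j y ∂(P : MeasureTheory.Measure M) - ∫ y, u j y ∂ν|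
        < 1/((k:ℝ)+1) := by
    intro k
    set ε : ℝ := 1/((k:ℝ)+1) with hεdef
    have hε : 0 < ε := by positivity
    obtain ⟨η, hη, hunif⟩ := unif_many (k+1) u (half_pos hε)
    obtain ⟨δ, hδ, hsh⟩ := hshadow η hη
    obtain ⟨x, i, hi, hret, havg⟩ := core f ν hμ (k+1) u (half_pos hε) hδ
    -- periodic pseudo-orbit
    set y : ℕ → M := fun n => f^[n % i] x with hydef
    have hpseudo : ∀ n, dist (f (y n)) (y (n+1)) < δ := by
      intro n
      rcases mod_succ_cases i n hi with ⟨h1, h2⟩ | ⟨h1, h2⟩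
      · have hfy : f (y n) = y (n+1) := by
          simp only [hydef, h1]
          exact (Function.iterate_succ_apply' f (n % i) x).symm
        rw [hfy, dist_self]
        exact hδ
      · have hfy : f (y n) = f^[i] x := by
          simp only [hydef]
          rw [← Function.iterate_succ_apply' f (n % i) x, Nat.succ_eq_add_one, h2]
        have hy1 : y (n+1) = x := by simp [hydef, h1]
        rw [hfy, hy1]
        exact hret
    have hper : ∀ n, y (n + i) = y n := by
      intro n; simp [hydef, Nat.add_mod_right]
    obtain ⟨z, ⟨m, hm, hfz⟩, hshadowed⟩ := hsh y i hi hpseudo hper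
    set P0 : MeasureTheory.Measure M := (m : ℝ≥0∞)⁻¹ •
      ∑ j ∈ Finset.range m, MeasureTheory.Measure.dirac (f^[j] z) with hP0def
    haveI hP0prob : IsProbabilityMeasure P0 := periodic_prob f z m hm
    refine ⟨⟨P0, hP0prob⟩, ⟨z, m, hm, hfz, rfl⟩, ?_⟩
    intro j hj
    show |∫ y, u j y ∂P0 - ∫ y, u j y ∂ν| < ε
    have hintP : ∫ y, u j y ∂P0 = (m:ℝ)⁻¹ * ∑ l ∈ Finset.range m, u j (f^[l] z) :=
      integral_periodic f z m hm (u j)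
    -- pointwise comparison along the orbit
    have hpointest : ∀ l : ℕ, |u j (f^[l] z) - u j (f^[l % i] x)| < ε/2 := by
      intro l
      have hd := hshadowed l
      have := hunif j (Nat.lt_succ_of_le hj) _ _ hd
      rwa [Real.dist_eq] at this
    set a : ℕ → ℝ := fun l => u j (f^[l] z) with hadef
    set b : ℕ → ℝ := fun l => u j (f^[l % i] x) with hbdef
    have hpa : ∀ l, a (l + m) = a l := by
      intro l
      simp only [hadef]
      rw [Function.iterate_add_apply, hfz]
    have hpb : ∀ l, b (l + i) = b l := by
      intro l
      simp only [hbdef, Nat.add_mod_right]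
    have hsa : ∑ l ∈ Finset.range (i*m), a l = (i:ℝ) * ∑ l ∈ Finset.range m, a l :=
      sum_block a m hpa i
    have hsb : ∑ l ∈ Finset.range (m*i), b l = (m:ℝ) * ∑ l ∈ Finset.range i, b l :=
      sum_block b i hpb m
    have hbi : ∑ l ∈ Finset.range i, b l = ∑ l ∈ Finset.range i, u j (f^[l] x) := by
      refine Finset.sum_congr rfl fun l hl => ?_
      simp only [hbdef]
      rw [Nat.mod_eq_of_lt (Finset.mem_range.mp hl)]
    have hipos : (0:ℝ) < (i:ℝ) := by exact_mod_cast hi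
    have hmpos : (0:ℝ) < (m:ℝ) := by exact_mod_cast hm
    have hbavg : birkhoffAverage ℝ f (⇑(u j)) i x
        = (i:ℝ)⁻¹ * ∑ l ∈ Finset.range i, u j (f^[l] x) := by
      simp [birkhoffAverage, birkhoffSum, smul_eq_mul]
    have hdiff : |(m:ℝ)⁻¹ * ∑ l ∈ Finset.range m, a l
        - birkhoffAverage ℝ f (⇑(u j)) i x| ≤ ε/2 := by
      have e1 : (m:ℝ)⁻¹ * ∑ l ∈ Finset.range m, a l
          = ((i:ℝ)*(m:ℝ))⁻¹ * ∑ l ∈ Finset.range (i*m), a l := by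
        rw [hsa]
        field_simp
      have e2 : birkhoffAverage ℝ f (⇑(u j)) i x
          = ((i:ℝ)*(m:ℝ))⁻¹ * ∑ l ∈ Finset.range (i*m), b l := by
        rw [hbavg, ← hbi, show i*m = m*i from Nat.mul_comm i m, hsb]
        field_simp
      rw [e1, e2, ← mul_sub, ← Finset.sum_sub_distrib, abs_mul,
        abs_of_nonneg (inv_nonneg.mpr (by positivity : (0:ℝ) ≤ (i:ℝ)*(m:ℝ)))]
      calc ((i:ℝ)*(m:ℝ))⁻¹ * |∑ l ∈ Finset.range (i*m), (a l - b l)|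
          ≤ ((i:ℝ)*(m:ℝ))⁻¹ * ∑ l ∈ Finset.range (i*m), |a l - b l| := by
            refine mul_le_mul_of_nonneg_left (Finset.abs_sum_le_sum_abs _ _) (by positivity)
        _ ≤ ((i:ℝ)*(m:ℝ))⁻¹ * ∑ l ∈ Finset.range (i*m), (ε/2) := by
            refine mul_le_mul_of_nonneg_left
              (Finset.sum_le_sum (fun l _ => (hpointest l).le)) (by positivity)
        _ = ((i:ℝ)*(m:ℝ))⁻¹ * (((i*m:ℕ):ℝ) * (ε/2)) := by
            rw [Finset.sum_const, Finset.card_range, nsmul_eq_mul]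
        _ = ε/2 := by
            push_cast
            field_simp
    have havgj := havg j (Nat.lt_succ_of_le hj)
    rw [hintP]
    calc |(m:ℝ)⁻¹ * ∑ l ∈ Finset.range m, u j (f^[l] z) - ∫ y, u j y ∂ν|
        ≤ |(m:ℝ)⁻¹ * ∑ l ∈ Finset.range m, a l - birkhoffAverage ℝ f (⇑(u j)) i x|
          + |birkhoffAverage ℝ f (⇑(u j)) i x - ∫ y, u j y ∂ν| := by
          have : (m:ℝ)⁻¹ * ∑ l ∈ Finset.range m, u j (f^[l] z) - ∫ y, u j y ∂ν
              = ((m:ℝ)⁻¹ * ∑ l ∈ Finset.range m, a l - birkhoffAverage ℝ f (⇑(u j)) i x)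
                + (birkhoffAverage ℝ f (⇑(u j)) i x - ∫ y, u j y ∂ν) := by
            simp only [hadef]
            ring
          rw [this]
          exact abs_add_le _ _
      _ < ε/2 + ε/2 := by
          exact add_lt_add_of_le_of_lt hdiff havgj
      _ = ε := by ring
  -- assemble the sequence and conclude
  choose P hPmem hPclose using main
  refine mem_closure_of_tendsto (f := P) (b := atTop) ?_ ?_
  · rw [ProbabilityMeasure.tendsto_iff_forall_integral_tendsto]
    intro g
    rw [Metric.tendsto_atTop]
    intro ε hε
    obtain ⟨j, hj⟩ := Metric.denseRange_iff.mp hudense g (ε/3) (by positivity)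
    obtain ⟨K, hK⟩ := exists_nat_gt (3/ε)
    refine ⟨max j K, fun k hk => ?_⟩
    have hjk : j ≤ k := le_trans (le_max_left _ _) hk
    have hKk : K ≤ k := le_trans (le_max_right _ _) hk
    have hsmall : 1/((k:ℝ)+1) < ε/3 := by
      rw [div_lt_div_iff₀ (by positivity) (by norm_num)]
      have h1 : (3:ℝ)/ε < (K:ℝ) := hK
      have h2 : (K:ℝ) ≤ (k:ℝ) := by exact_mod_cast hKk
      rw [div_lt_iff₀ hε] at h1
      nlinarith
    have hbd : ∀ (Q : MeasureTheory.Measure M), IsProbabilityMeasure Q →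
        |∫ y, g y ∂Q - ∫ y, u j y ∂Q| ≤ dist g (u j) := by
      intro Q hQ
      rw [← integral_sub (g.integrable Q) ((u j).integrable Q)]
      have hb : ∀ᵐ y ∂Q, ‖g y - u j y‖ ≤ dist g (u j) := by
        refine ae_of_all _ fun y => ?_
        rw [← dist_eq_norm]
        exact BoundedContinuousFunction.dist_coe_le_dist y
      have := norm_integral_le_of_norm_le_const hb
      simpa [measure_univ, Real.norm_eq_abs] using this
    have h1 := hbd (P k : MeasureTheory.Measure M) inferInstance
    have h2 := hbd ν inferInstance
    have h3 := hPclose k j hjk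
    have hdg : dist g (u j) < ε/3 := hj
    rw [Real.dist_eq]
    calc |∫ ω, g ω ∂(P k : MeasureTheory.Measure M) - ∫ ω, g ω ∂ν|
        ≤ |∫ y, g y ∂(P k : MeasureTheory.Measure M) - ∫ y, u j y ∂(P k : MeasureTheory.Measure M)|
          + |∫ y, u j y ∂(P k : MeasureTheory.Measure M) - ∫ y, u j y ∂ν|
          + |∫ y, u j y ∂ν - ∫ y, g y ∂ν| := by
          have heq : ∫ ω, g ω ∂(P k : MeasureTheory.Measure M) - ∫ ω, g ω ∂ν
              = (∫ y, g y ∂(P k : MeasureTheory.Measure M) - ∫ y, u j y ∂(P k : MeasureTheory.Measure M))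
                + (∫ y, u j y ∂(P k : MeasureTheory.Measure M) - ∫ y, u j y ∂ν)
                + (∫ y, u j y ∂ν - ∫ y, g y ∂ν) := by ring
          rw [heq]
          exact (abs_add_le _ _).trans (add_le_add_left (abs_add_le _ _) _)
      _ < ε/3 + ε/3 + ε/3 := by
          have h2' : |∫ y, u j y ∂ν - ∫ y, g y ∂ν| ≤ dist g (u j) := by
            rw [abs_sub_comm]
            exact h2
          have := lt_of_lt_of_le h3 hsmall.le
          exact add_lt_add (add_lt_add_of_le_of_lt (h1.trans hdg.le) this)
            (lt_of_le_of_lt h2' hdg)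
      _ = ε := by ring
  · exact Filter.Eventually.of_forall (fun k => hPmem k)
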